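/- Let C be a cartesian closed category with a fixed object S, and T the state monad T X = (S × X)^S. Let (X, h) be a T-algebra, f_X = h ∘ (q_{S×X})^* : S × X ⟶ X, and suppose f_X = m ∘ e with e : S × X ⟶ Y an epimorphism and m : Y ⟶ X a monomorphism. Then the transpose e^* : X ⟶ Y^S is a morphism of T-algebras from (X, h) to (Y^S, ε_Y^S), i.e. e^* ∘ h = ε_Y^S ∘ T(e^*). -/

import Mathlib

open CategoryTheory CategoryTheory.MonoidalCategory CategoryTheory.Limits
  CategoryTheory.CartesianMonoidalCategory

open MonoidalClosed

/-- In a cartesian closed category `C` with a fixed object `S`, for the state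
monad `T X = (S × X)^S` and a `T`-algebra `(X, h)`, if `f_X = h ∘ (q_{S×X})^*` factors as an epi
`e : S × X ⟶ Y` followed by a mono `m : Y ⟶ X`, then the transpose `e^* : X ⟶ Y^S` is a
morphism of `T`-algebras `(X, h) ⟶ (Y^S, ε_Y^S)`, i.e. `e^* ∘ h = ε_Y^S ∘ T(e^*)`. -/
theorem stmt12 {C : Type u} [Category.{v} C] [CartesianMonoidalCategory C] [MonoidalClosed C]
    (S : C) (A : ((ihom.adjunction S).toMonad).Algebra)
    (Y : C) (e : S ⊗ A.A ⟶ Y) (m : Y ⟶ A.A)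
    (hfac : MonoidalClosed.curry (snd S (S ⊗ A.A)) ≫ A.a = e ≫ m)
    (he : Epi e) (hm : Mono m) :
    A.a ≫ MonoidalClosed.curry e =
      ((ihom.adjunction S).toMonad : C ⥤ C).map (MonoidalClosed.curry e) ≫
        (ihom S).map ((ihom.ev S).app Y) := by
  have h1 : (S ◁ A.a) ≫ curry (snd S (S ⊗ A.A)) =
      curry (snd S (S ⊗ ((ihom S).obj (S ⊗ A.A)))) ≫ (ihom S).map (S ◁ A.a) := by
    rw [← curry_natural_left, ← curry_natural_right, whiskerLeft_snd]; rfl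
  have h2 : (ihom.ev S).app (S ⊗ A.A) ≫ curry (snd S (S ⊗ A.A)) =
      curry (snd S (S ⊗ ((ihom S).obj (S ⊗ A.A)))) ≫ (ihom S).map ((ihom.ev S).app (S ⊗ A.A)) := by
    rw [← curry_natural_left, ← curry_natural_right, whiskerLeft_snd]; rfl
  have key : ((S ◁ A.a) ≫ e : S ⊗ (ihom S).obj (S ⊗ A.A) ⟶ Y) =
      ((ihom.ev S).app (S ⊗ A.A) ≫ e : S ⊗ (ihom S).obj (S ⊗ A.A) ⟶ Y) := by
    rw [← cancel_mono m, Category.assoc, Category.assoc, ← hfac]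
    erw [reassoc_of% h1, reassoc_of% h2]
    refine (Category.assoc _ _ _).trans ?_
    refine congrArg (curry (snd S (S ⊗ ((ihom S).obj (S ⊗ A.A)))) ≫ ·) ?_
    exact A.assoc.symm
  apply uncurry_injective
  rw [uncurry_natural_left, uncurry_curry]
  erw [key]
  show _ = uncurry ((ihom S).map (S ◁ curry e) ≫ (ihom S).map ((ihom.ev S).app Y))
  rw [← Functor.map_comp, ← uncurry_eq, uncurry_curry,
    ← Category.id_comp ((ihom S).map e), uncurry_natural_right, uncurry_id_eq_ev]
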